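/- arXiv:0906.1541 — 4 statements merged into one kernel-verified Lean document; each statement's English description precedes it below -/
import Mathlib

section
/- Let d ≥ 1, let ψ : [1,∞) → (0,∞) be a decreasing function with ψ(T) → 0 as T → ∞, and assume that for every λ ≥ 1 there exists c > 0 with ψ(λT) ≥ c·ψ(T) for all T ≥ 1. Let w = (w_1,…,w_d) ∈ ℝ^d and set w* = (1,w_1,…,w_d) ∈ ℝ^{d+1}. Then the following are equivalent: (i) inf over nonzero x ∈ ℤ^{d+1} of (1/ψ(|x|_∞)) · inf_{t∈ℝ} |x − t·w*|_∞ > 0; (ii) there exists γ > 0 such that max_{1≤j≤d} ‖q·w_j‖ ≥ γ·ψ(|q|) for every nonzero integer q, where ‖·‖ denotes the distance to the nearest integer. -/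
/-- The lift `w ↦ (1, w)` from `ℝ^d` to `ℝ^{d+1}`. -/
noncomputable def lift1 {d : ℕ} (w : Fin d → ℝ) : Fin (d+1) → ℝ := Fin.cons 1 w

/-- Distance from a real number to the nearest integer. -/
noncomputable def nint (t : ℝ) : ℝ := ⨅ n : ℤ, |t - (n : ℝ)|

lemma nint_nonneg (t : ℝ) : 0 ≤ nint t :=
  le_ciInf fun _ => abs_nonneg _

lemma nint_le (t : ℝ) (n : ℤ) : nint t ≤ |t - (n : ℝ)| :=
  ciInf_le ⟨0, by rintro y ⟨m, rfl⟩; exact abs_nonneg _⟩ n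

lemma abs_sub_round_le_nint (t : ℝ) : |t - (round t : ℝ)| ≤ nint t :=
  le_ciInf fun n => round_le t n

theorem badly_approximable_equivalence
    (d : ℕ) (hd : 1 ≤ d)
    (ψ : ℝ → ℝ)
    (hψpos : ∀ T, 1 ≤ T → 0 < ψ T)
    (hψanti : ∀ T₁ T₂, 1 ≤ T₁ → T₁ ≤ T₂ → ψ T₂ ≤ ψ T₁)
    (hψ0 : Filter.Tendsto ψ Filter.atTop (nhds 0))
    -- `ψ` decays at most polynomially: for every `λ ≥ 1` there is `c > 0` with `ψ(λT) ≥ c ψ(T)`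
    (hψscale : ∀ l : ℝ, 1 ≤ l → ∃ c > (0:ℝ), ∀ T, 1 ≤ T → c * ψ T ≤ ψ (l * T))
    (w : Fin d → ℝ) :
    -- (i) the point `(1,w)` is `ψ`-badly approximable in the distance-to-line sense
    (∃ γ > (0:ℝ), ∀ x : Fin (d+1) → ℤ, x ≠ 0 →
      γ * ψ ‖(fun i => (x i : ℝ))‖ ≤ ⨅ t : ℝ, ‖(fun i => (x i : ℝ)) - t • lift1 w‖)
    ↔
    -- (ii) `max_j ‖q w_j‖ ≥ γ ψ(|q|)` for all nonzero integers `q`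
    (∃ γ > (0:ℝ), ∀ q : ℤ, q ≠ 0 →
      γ * ψ (|q| : ℤ) ≤ ⨆ j : Fin d, nint ((q : ℝ) * w j)) := by
  have hFin : Nonempty (Fin d) := ⟨⟨0, hd⟩⟩
  set W : ℝ := ‖w‖ with hWdef
  have hW0 : 0 ≤ W := norm_nonneg _
  have hwj : ∀ j, |w j| ≤ W := fun j => by
    simpa [Real.norm_eq_abs] using norm_le_pi_norm w j
  have hB1 : (1:ℝ) ≤ 1 + W := by linarith
  have hB0 : (0:ℝ) < 1 + W := by linarith
  -- norm lower bound for nonzero integer vectors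
  have hXone : ∀ x : Fin (d+1) → ℤ, x ≠ 0 → (1:ℝ) ≤ ‖(fun i => (x i : ℝ))‖ := by
    intro x hx
    obtain ⟨i, hi⟩ := Function.ne_iff.mp hx
    have h1 : (1:ℝ) ≤ |(x i : ℝ)| := by
      rw [← Int.cast_abs]
      exact_mod_cast Int.one_le_abs hi
    calc (1:ℝ) ≤ |(x i : ℝ)| := h1
      _ ≤ ‖(fun i => (x i : ℝ))‖ := by
          simpa [Real.norm_eq_abs] using norm_le_pi_norm (fun i => (x i : ℝ)) i
  have hbddS : ∀ q : ℤ, BddAbove (Set.range fun j : Fin d => nint ((q:ℝ) * w j)) :=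
    fun q => Set.Finite.bddAbove (Set.finite_range _)
  have hbddI : ∀ X : Fin (d+1) → ℝ,
      BddBelow (Set.range fun t : ℝ => ‖X - t • lift1 w‖) := by
    intro X
    exact ⟨0, by rintro y ⟨t, rfl⟩; exact norm_nonneg _⟩
  constructor
  · rintro ⟨γ, hγ, H⟩
    obtain ⟨c, hc, hcψ⟩ := hψscale (1 + W) hB1
    refine ⟨γ * c, by positivity, ?_⟩
    intro q hq
    have hq1 : (1:ℝ) ≤ |(q:ℝ)| := by
      rw [← Int.cast_abs]; exact_mod_cast Int.one_le_abs hq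
    set x : Fin (d+1) → ℤ := Fin.cons q (fun j => round ((q:ℝ) * w j)) with hxdef
    have hx0 : x 0 = q := rfl
    have hxs : ∀ j : Fin d, x j.succ = round ((q:ℝ) * w j) := fun j => rfl
    have hxne : x ≠ 0 := by
      intro h
      exact hq (by simpa [hx0] using congrFun h 0)
    set S : ℝ := ⨆ j : Fin d, nint ((q:ℝ) * w j) with hSdef
    have hS0 : 0 ≤ S := by
      obtain ⟨j⟩ := hFin
      exact le_trans (nint_nonneg ((q:ℝ) * w j)) (le_ciSup (hbddS q) j)
    -- the norm of x - q • lift1 w is at most S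
    have hnorm1 : ‖(fun i => (x i : ℝ)) - (q:ℝ) • lift1 w‖ ≤ S := by
      rw [pi_norm_le_iff_of_nonneg hS0]
      intro i
      induction i using Fin.cases with
      | zero =>
          simp [hx0, lift1, Real.norm_eq_abs, hS0]
      | succ j =>
          have : ((fun i => (x i : ℝ)) - (q:ℝ) • lift1 w) j.succ
              = (round ((q:ℝ) * w j) : ℝ) - (q:ℝ) * w j := by
            simp [hxs j, lift1]
          rw [Real.norm_eq_abs, this, abs_sub_comm]
          exact le_trans (abs_sub_round_le_nint _) (le_ciSup (hbddS q) j)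
    have hinf_le : (⨅ t : ℝ, ‖(fun i => (x i : ℝ)) - t • lift1 w‖) ≤ S :=
      le_trans (ciInf_le (hbddI _) (q:ℝ)) hnorm1
    -- the norm of x is at most (1+W)|q|
    have hnormx : ‖(fun i => (x i : ℝ))‖ ≤ (1 + W) * |(q:ℝ)| := by
      rw [pi_norm_le_iff_of_nonneg (by positivity)]
      intro i
      induction i using Fin.cases with
      | zero =>
          rw [Real.norm_eq_abs]
          simp only [hx0]
          nlinarith [abs_nonneg ((q:ℝ))]
      | succ j =>
          rw [Real.norm_eq_abs]
          simp only [hxs j]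
          have h1 : |(round ((q:ℝ) * w j) : ℝ)| ≤ |(round ((q:ℝ) * w j) : ℝ) - (q:ℝ) * w j| + |(q:ℝ) * w j| := by
            have := abs_sub_abs_le_abs_sub ((round ((q:ℝ) * w j) : ℝ)) ((q:ℝ) * w j)
            nlinarith [abs_nonneg ((q:ℝ) * w j)]
          have h2 : |(round ((q:ℝ) * w j) : ℝ) - (q:ℝ) * w j| ≤ 1/2 := by
            rw [abs_sub_comm]; exact abs_sub_round _
          have h3 : |(q:ℝ) * w j| ≤ |(q:ℝ)| * W := by
            rw [abs_mul]
            exact mul_le_mul_of_nonneg_left (hwj j) (abs_nonneg _)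
          nlinarith
    have hX1 : (1:ℝ) ≤ ‖(fun i => (x i : ℝ))‖ := hXone x hxne
    have hψ1 : ψ ((1 + W) * |(q:ℝ)|) ≤ ψ ‖(fun i => (x i : ℝ))‖ :=
      hψanti _ _ hX1 hnormx
    have hψ2 : c * ψ |(q:ℝ)| ≤ ψ ((1 + W) * |(q:ℝ)|) := hcψ _ hq1
    have hchain : γ * (c * ψ |(q:ℝ)|) ≤ S := by
      calc γ * (c * ψ |(q:ℝ)|) ≤ γ * ψ ‖(fun i => (x i : ℝ))‖ := by
            apply mul_le_mul_of_nonneg_left _ (le_of_lt hγ)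
            exact le_trans hψ2 hψ1
        _ ≤ ⨅ t : ℝ, ‖(fun i => (x i : ℝ)) - t • lift1 w‖ := H x hxne
        _ ≤ S := hinf_le
    rw [Int.cast_abs]
    linarith [hchain]
  · rintro ⟨γ, hγ, H⟩
    have hψ1pos : 0 < ψ 1 := hψpos 1 le_rfl
    refine ⟨min (γ / (1 + W)) (1 / ((1 + W) * ψ 1)), by positivity, ?_⟩
    intro x hx
    set X : Fin (d+1) → ℝ := fun i => (x i : ℝ) with hXdef
    have hX1 : (1:ℝ) ≤ ‖X‖ := hXone x hx
    have hψX1 : ψ ‖X‖ ≤ ψ 1 := hψanti 1 ‖X‖ le_rfl hX1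
    have hψXpos : 0 < ψ ‖X‖ := hψpos _ hX1
    apply le_ciInf
    intro t
    set N : ℝ := ‖X - t • lift1 w‖ with hNdef
    have hN0 : 0 ≤ N := norm_nonneg _
    have hc0 : |(x 0 : ℝ) - t| ≤ N := by
      have := norm_le_pi_norm (X - t • lift1 w) 0
      rw [hNdef]
      simpa [X, lift1, Real.norm_eq_abs] using this
    have hcj : ∀ j : Fin d, |(x j.succ : ℝ) - t * w j| ≤ N := by
      intro j
      have := norm_le_pi_norm (X - t • lift1 w) j.succ
      rw [hNdef]
      simpa [X, lift1, Real.norm_eq_abs] using this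
    by_cases hq : x 0 = 0
    · -- first coordinate vanishes: the inf is bounded below by 1/(1+W)
      obtain ⟨i, hi⟩ := Function.ne_iff.mp hx
      rcases Fin.eq_zero_or_eq_succ i with rfl | ⟨j, rfl⟩
      · exact absurd hq hi
      have h1 : (1:ℝ) ≤ |(x j.succ : ℝ)| := by
        rw [← Int.cast_abs]; exact_mod_cast Int.one_le_abs hi
      have ht : |t| ≤ N := by simpa [hq] using hc0
      have h2 : |(x j.succ : ℝ)| ≤ N + N * W := by
        calc |(x j.succ : ℝ)| ≤ |(x j.succ : ℝ) - t * w j| + |t * w j| := by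
              nlinarith [abs_sub_abs_le_abs_sub ((x j.succ : ℝ)) (t * w j), abs_nonneg (t * w j)]
          _ ≤ N + N * W := by
              have : |t * w j| ≤ N * W := by
                rw [abs_mul]
                exact mul_le_mul ht (hwj j) (abs_nonneg _) hN0
              linarith [hcj j]
      have hNlb : 1 / (1 + W) ≤ N := by
        rw [div_le_iff₀ hB0]
        nlinarith
      calc min (γ / (1 + W)) (1 / ((1 + W) * ψ 1)) * ψ ‖X‖
          ≤ (1 / ((1 + W) * ψ 1)) * ψ ‖X‖ :=
            mul_le_mul_of_nonneg_right (min_le_right _ _) (le_of_lt hψXpos)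
        _ ≤ (1 / ((1 + W) * ψ 1)) * ψ 1 :=
            mul_le_mul_of_nonneg_left hψX1 (by positivity)
        _ = 1 / (1 + W) := by field_simp
        _ ≤ N := hNlb
    · -- first coordinate q = x 0 is nonzero
      have hq1 : (1:ℝ) ≤ |(x 0 : ℝ)| := by
        rw [← Int.cast_abs]; exact_mod_cast Int.one_le_abs hq
      have hqX : |(x 0 : ℝ)| ≤ ‖X‖ := by
        simpa [X, Real.norm_eq_abs] using norm_le_pi_norm X 0
      have hψq : ψ ‖X‖ ≤ ψ |(x 0 : ℝ)| := hψanti _ _ hq1 hqX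
      have hS : γ * ψ |(x 0 : ℝ)| ≤ ⨆ j : Fin d, nint ((x 0 : ℝ) * w j) := by
        have := H (x 0) hq
        rwa [Int.cast_abs] at this
      have hSN : (⨆ j : Fin d, nint ((x 0 : ℝ) * w j)) ≤ N + N * W := by
        apply ciSup_le
        intro j
        have h1 : nint ((x 0 : ℝ) * w j) ≤ |(x 0 : ℝ) * w j - (x j.succ : ℝ)| :=
          nint_le _ (x j.succ)
        have h2 : |(x 0 : ℝ) * w j - (x j.succ : ℝ)| ≤ N + N * W := by
          have e : (x 0 : ℝ) * w j - (x j.succ : ℝ)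
              = (((x 0 : ℝ) - t) * w j) - ((x j.succ : ℝ) - t * w j) := by ring
          rw [e]
          calc |(((x 0 : ℝ) - t) * w j) - ((x j.succ : ℝ) - t * w j)|
              ≤ |((x 0 : ℝ) - t) * w j| + |(x j.succ : ℝ) - t * w j| := abs_sub _ _
            _ ≤ N * W + N := by
                have : |((x 0 : ℝ) - t) * w j| ≤ N * W := by
                  rw [abs_mul]
                  exact mul_le_mul hc0 (hwj j) (abs_nonneg _) hN0
                linarith [hcj j]
            _ = N + N * W := by ring
        linarith
      have key : γ * ψ ‖X‖ ≤ (1 + W) * N := by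
        calc γ * ψ ‖X‖ ≤ γ * ψ |(x 0 : ℝ)| :=
              mul_le_mul_of_nonneg_left hψq (le_of_lt hγ)
          _ ≤ ⨆ j : Fin d, nint ((x 0 : ℝ) * w j) := hS
          _ ≤ N + N * W := hSN
          _ = (1 + W) * N := by ring
      calc min (γ / (1 + W)) (1 / ((1 + W) * ψ 1)) * ψ ‖X‖
          ≤ (γ / (1 + W)) * ψ ‖X‖ :=
            mul_le_mul_of_nonneg_right (min_le_left _ _) (le_of_lt hψXpos)
        _ ≤ N := by
            rw [div_mul_eq_mul_div, div_le_iff₀ hB0]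
            linarith [key]
end

section
/- Let d ≥ 1, R ≥ 1, and let ψ : [1,∞) → (0,∞) be decreasing. Let B ⊆ ℝ^d be an affine subspace and γ > 0 a constant such that dist_∞(x,𝔅) > γ·ψ(|x|_∞) for every nonzero x ∈ ℤ^{d+1}. For a real T ≥ 1 define Ω_T = {z ∈ ℝ^{d+1} : 0 ≤ z_0 ≤ T, max_{1≤j≤d}|z_j| ≤ RT, dist_∞(z,𝔅) ≤ γ·ψ(RT)}. Then for every c ∈ ℝ^{d+1}, the translated dilate (1/2)·Ω_T + c = {z/2 + c : z ∈ Ω_T} contains at most one integer point. -/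
/-- The linear span `𝔅 ⊆ ℝ^{d+1}` of `{(1,w) : w ∈ B}` for an affine subspace `B ⊆ ℝ^d`. -/
noncomputable def spanLift {d : ℕ} (B : AffineSubspace ℝ (Fin d → ℝ)) :
    Submodule ℝ (Fin (d+1) → ℝ) :=
  Submodule.span ℝ (lift1 '' (B : Set (Fin d → ℝ)))

/-- The set `Ω_T`. -/
noncomputable def OmegaSet {d : ℕ} (B : AffineSubspace ℝ (Fin d → ℝ))
    (ψ : ℝ → ℝ) (R T γ : ℝ) : Set (Fin (d+1) → ℝ) :=
  {z | 0 ≤ z 0 ∧ z 0 ≤ T ∧ (∀ j : Fin d, |z j.succ| ≤ R * T) ∧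
    Metric.infDist z (spanLift B : Set (Fin (d+1) → ℝ)) ≤ γ * ψ (R * T)}

lemma infDist_half_sub_le {E : Type*} [NormedAddCommGroup E] [NormedSpace ℝ E]
    (S : Submodule ℝ E) (a b : E) :
    Metric.infDist ((1/2 : ℝ) • (a - b)) (S : Set E) ≤
      (Metric.infDist a (S : Set E) + Metric.infDist b (S : Set E)) / 2 := by
  have hne : (S : Set E).Nonempty := ⟨0, S.zero_mem⟩
  refine le_of_forall_pos_le_add (fun ε hε => ?_)
  obtain ⟨p, hp, hdp⟩ := (Metric.infDist_lt_iff hne).mp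
    (show Metric.infDist a (S : Set E) < Metric.infDist a (S : Set E) + ε by linarith)
  obtain ⟨q, hq, hdq⟩ := (Metric.infDist_lt_iff hne).mp
    (show Metric.infDist b (S : Set E) < Metric.infDist b (S : Set E) + ε by linarith)
  have hm : (1/2 : ℝ) • (p - q) ∈ (S : Set E) := S.smul_mem _ (S.sub_mem hp hq)
  have h1 : Metric.infDist ((1/2 : ℝ) • (a - b)) (S : Set E) ≤
      dist ((1/2 : ℝ) • (a - b)) ((1/2 : ℝ) • (p - q)) := Metric.infDist_le_dist_of_mem hm
  have h2 : dist ((1/2 : ℝ) • (a - b)) ((1/2 : ℝ) • (p - q)) ≤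
      (dist a p + dist b q) / 2 := by
    rw [dist_eq_norm, ← smul_sub, norm_smul]
    have : a - b - (p - q) = (a - p) - (b - q) := by abel
    rw [this]
    have := norm_sub_le (a - p) (b - q)
    rw [dist_eq_norm, dist_eq_norm]
    have h12 : ‖(1/2 : ℝ)‖ = 1/2 := by norm_num
    rw [h12]
    linarith
  linarith

theorem half_omega_translate_at_most_one_integer_point
    (d : ℕ) (hd : 1 ≤ d) (R : ℝ) (hR : 1 ≤ R)
    (ψ : ℝ → ℝ)
    (hψpos : ∀ T, 1 ≤ T → 0 < ψ T)
    (hψanti : ∀ T₁ T₂, 1 ≤ T₁ → T₁ ≤ T₂ → ψ T₂ ≤ ψ T₁)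
    (B : AffineSubspace ℝ (Fin d → ℝ)) (γ : ℝ) (hγ : 0 < γ)
    (hBbad : ∀ x : Fin (d+1) → ℤ, x ≠ 0 →
      γ * ψ ‖(fun i => (x i : ℝ))‖ <
        Metric.infDist (fun i => (x i : ℝ)) (spanLift B : Set (Fin (d+1) → ℝ)))
    (T : ℝ) (hT : 1 ≤ T) (c : Fin (d+1) → ℝ) :
    ∀ x y : Fin (d+1) → ℤ,
      (∃ z ∈ OmegaSet B ψ R T γ, (fun i => (x i : ℝ)) = (1/2 : ℝ) • z + c) →
      (∃ z ∈ OmegaSet B ψ R T γ, (fun i => (y i : ℝ)) = (1/2 : ℝ) • z + c) →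
      x = y := by
  intro x y ⟨z₁, hz₁, hx⟩ ⟨z₂, hz₂, hy⟩
  by_contra hxy
  set w : Fin (d+1) → ℤ := x - y with hw
  have hwne : w ≠ 0 := sub_ne_zero.mpr hxy
  obtain ⟨hz₁0, hz₁T, hz₁j, hz₁d⟩ := hz₁
  obtain ⟨hz₂0, hz₂T, hz₂j, hz₂d⟩ := hz₂
  set wR : Fin (d+1) → ℝ := fun i => (w i : ℝ) with hwR
  have hRT : (1:ℝ) ≤ R * T := by nlinarith
  -- wR = (1/2) • (z₁ - z₂)
  have hkey : wR = (1/2 : ℝ) • (z₁ - z₂) := by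
    funext i
    have h1 : (x i : ℝ) = (1/2 : ℝ) * z₁ i + c i := congrFun hx i
    have h2 : (y i : ℝ) = (1/2 : ℝ) * z₂ i + c i := congrFun hy i
    simp only [hwR, hw, Pi.sub_apply, Int.cast_sub, Pi.smul_apply, smul_eq_mul]
    rw [h1, h2]; ring
  -- norm bound
  have hbound : ∀ i, |wR i| ≤ R * T := by
    intro i
    rw [hkey]
    induction i using Fin.cases with
    | zero =>
      simp only [Pi.smul_apply, Pi.sub_apply, smul_eq_mul]
      rw [abs_mul, abs_of_nonneg (by norm_num : (0:ℝ) ≤ 1/2)]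
      have : |z₁ 0 - z₂ 0| ≤ T := abs_sub_le_of_nonneg_of_le hz₁0 hz₁T hz₂0 hz₂T
      nlinarith
    | succ j =>
      simp only [Pi.smul_apply, Pi.sub_apply, smul_eq_mul]
      rw [abs_mul, abs_of_nonneg (by norm_num : (0:ℝ) ≤ 1/2)]
      have := abs_sub (z₁ j.succ) (z₂ j.succ)
      have h1 := hz₁j j
      have h2 := hz₂j j
      nlinarith [abs_sub_abs_le_abs_sub (z₁ j.succ) (z₂ j.succ), abs_sub (z₁ j.succ) (z₂ j.succ)]
  have hnorm_le : ‖wR‖ ≤ R * T := by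
    apply pi_norm_le_iff_of_nonneg (by linarith) |>.mpr
    intro i
    simpa [Real.norm_eq_abs] using hbound i
  have hnorm_ge : (1:ℝ) ≤ ‖wR‖ := by
    obtain ⟨i, hi⟩ := Function.ne_iff.mp hwne
    have h1 : (1:ℝ) ≤ |wR i| := by
      simp only [hwR]
      exact_mod_cast Int.one_le_abs (by simpa using hi)
    calc (1:ℝ) ≤ |wR i| := h1
      _ = ‖wR i‖ := (Real.norm_eq_abs _).symm
      _ ≤ ‖wR‖ := norm_le_pi_norm wR i
  -- distance bound
  have hdist : Metric.infDist wR (spanLift B : Set (Fin (d+1) → ℝ)) ≤ γ * ψ (R * T) := by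
    rw [hkey]
    calc Metric.infDist ((1/2:ℝ) • (z₁ - z₂)) (spanLift B : Set (Fin (d+1) → ℝ))
        ≤ (Metric.infDist z₁ (spanLift B : Set (Fin (d+1) → ℝ)) +
           Metric.infDist z₂ (spanLift B : Set (Fin (d+1) → ℝ))) / 2 :=
          infDist_half_sub_le _ _ _
      _ ≤ γ * ψ (R * T) := by linarith
  have hbad := hBbad w hwne
  have hψmono : ψ (R * T) ≤ ψ ‖wR‖ := hψanti _ _ hnorm_ge hnorm_le
  have hmul : γ * ψ (R * T) ≤ γ * ψ ‖wR‖ := mul_le_mul_of_nonneg_left hψmono hγ.le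
  have hbad' : γ * ψ ‖wR‖ < Metric.infDist wR (spanLift B : Set (Fin (d+1) → ℝ)) := hbad
  linarith
end

section
/- Let d ≥ 1, R ≥ 1, γ > 0, and let ψ, φ : [1,∞) → (0,∞) be decreasing functions with φ(T) ≤ ψ(T) for all T ≥ 1. Let B ⊂ A be affine subspaces of ℝ^d with 0 ≤ b = dim B < a = dim A ≤ d. For a real T ≥ 1 define Ω_T = {z ∈ ℝ^{d+1} : 0 ≤ z_0 ≤ T, max_{1≤j≤d}|z_j| ≤ RT, dist_∞(z,𝔅) ≤ γ·ψ(RT)} and Π_T = {z ∈ ℝ^{d+1} : 0 ≤ z_0 ≤ T, max_{1≤j≤d}|z_j| ≤ RT, dist_∞(z,𝔄) ≤ φ(RT)}. Then there exists a constant C > 0, depending only on d, A, B, R and γ, such that for every T ≥ 1 the set Π_T can be covered by at most C·(T/ψ(RT))^{a−b} translates of (1/2)·Ω_T, i.e. there is a finite set S ⊂ ℝ^{d+1} with #S ≤ C·(T/ψ(RT))^{a−b} and Π_T ⊆ ⋃_{c ∈ S} ((1/2)·Ω_T + c). -/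
/-- The set `Π_T`. -/
noncomputable def PiSet {d : ℕ} (A : AffineSubspace ℝ (Fin d → ℝ))
    (φ : ℝ → ℝ) (R T : ℝ) : Set (Fin (d+1) → ℝ) :=
  {z | 0 ≤ z 0 ∧ z 0 ≤ T ∧ (∀ j : Fin d, |z j.succ| ≤ R * T) ∧
    Metric.infDist z (spanLift A : Set (Fin (d+1) → ℝ)) ≤ φ (R * T)}

set_option maxHeartbeats 2000000
set_option synthInstance.maxHeartbeats 400000

open Module

lemma net_lemma (E : Type*) [NormedAddCommGroup E] [NormedSpace ℝ E] [FiniteDimensional ℝ E]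
    (V : Submodule ℝ E) :
    ∃ κ : ℝ, 1 ≤ κ ∧ ∀ r ε : ℝ, 0 < ε → 0 ≤ r →
      ∃ S : Finset E, (↑S : Set E) ⊆ (V : Set E) ∧
        (S.card : ℝ) ≤ (κ * (r / ε + 1)) ^ (Module.finrank ℝ V) ∧
        ∀ v ∈ V, ‖v‖ ≤ r → ∃ c ∈ S, ‖v - c‖ ≤ ε := by
  classical
  set n := Module.finrank ℝ V with hn
  have bV : Basis (Fin n) ℝ V := Module.finBasis ℝ V
  obtain ⟨K, hK1, hKbound⟩ : ∃ K : ℝ, 1 ≤ K ∧ ∀ (x : V) (i : Fin n), |bV.coord i x| ≤ K * ‖x‖ := by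
    refine ⟨1 + ∑ i, ‖LinearMap.toContinuousLinearMap (bV.coord i)‖,
      by have : (0:ℝ) ≤ ∑ i, ‖LinearMap.toContinuousLinearMap (bV.coord i)‖ :=
            Finset.sum_nonneg fun i _ => ContinuousLinearMap.opNorm_nonneg _
         linarith, ?_⟩
    intro x i
    have h1 : |bV.coord i x| ≤ ‖LinearMap.toContinuousLinearMap (bV.coord i)‖ * ‖x‖ := by
      simpa using (LinearMap.toContinuousLinearMap (bV.coord i)).le_opNorm x
    have h2 : ‖LinearMap.toContinuousLinearMap (bV.coord i)‖
        ≤ 1 + ∑ j, ‖LinearMap.toContinuousLinearMap (bV.coord j)‖ := by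
      have := Finset.single_le_sum (f := fun j => ‖LinearMap.toContinuousLinearMap (bV.coord j)‖)
        (fun j _ => ContinuousLinearMap.opNorm_nonneg _) (Finset.mem_univ i)
      linarith
    nlinarith [norm_nonneg x]
  have hK0 : 0 < K := lt_of_lt_of_le one_pos hK1
  set M : ℝ := 1 + ∑ i, ‖(bV i : E)‖ with hM
  have hM1 : 1 ≤ M := by
    have : 0 ≤ ∑ i, ‖(bV i : E)‖ := Finset.sum_nonneg fun i _ => norm_nonneg _
    simp only [hM]; linarith
  have hM0 : 0 < M := lt_of_lt_of_le one_pos hM1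
  refine ⟨2 * K * M + 3, by nlinarith, ?_⟩
  intro r ε hε hr
  set step : ℝ := ε / M with hstep
  have hstep0 : 0 < step := div_pos hε hM0
  set N : ℕ := ⌈K * r / step⌉₊ with hN
  set S : Finset E := (Fintype.piFinset fun _ : Fin n => Finset.Icc (-(N:ℤ)) (N:ℤ)).image
    (fun k : Fin n → ℤ => ∑ i, ((k i : ℝ) * step) • (bV i : E)) with hS
  have hsub : (↑S : Set E) ⊆ (V : Set E) := by
    intro x hx
    simp only [hS, Finset.coe_image, Set.mem_image] at hx
    obtain ⟨k, -, rfl⟩ := hx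
    exact Submodule.sum_mem V fun i _ => Submodule.smul_mem V _ (bV i).2
  refine ⟨S, hsub, ?_, ?_⟩
  · -- cardinality
    have hcard : S.card ≤ (2 * N + 1) ^ n := by
      calc S.card ≤ (Fintype.piFinset fun _ : Fin n => Finset.Icc (-(N:ℤ)) (N:ℤ)).card :=
            Finset.card_image_le
        _ = (2 * N + 1) ^ n := by
            rw [Fintype.card_piFinset]
            rw [Finset.prod_const]
            simp only [Int.card_Icc, Finset.card_univ, Fintype.card_fin]
            congr 1
            omega
    have hNle : (N : ℝ) ≤ K * r / step + 1 := by
      have h0 : 0 ≤ K * r / step := div_nonneg (by nlinarith) hstep0.le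
      exact (Nat.ceil_lt_add_one h0).le
    have hbase : (2 * N + 1 : ℝ) ≤ (2 * K * M + 3) * (r / ε + 1) := by
      have hKr : K * r / step = K * M * (r / ε) := by
        rw [hstep]; field_simp
      have h3 : (2 * N + 1 : ℝ) ≤ 2 * (K * M * (r / ε)) + 3 := by
        rw [← hKr]; linarith
      have h2 : 0 ≤ r / ε := div_nonneg hr hε.le
      nlinarith
    have h4 : ((2 * N + 1 : ℕ) : ℝ) ^ n ≤ ((2 * K * M + 3) * (r / ε + 1)) ^ n := by
      apply pow_le_pow_left₀ (by positivity)
      push_cast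
      push_cast at hbase
      linarith
    calc (S.card : ℝ) ≤ ((2 * N + 1 : ℕ) ^ n : ℕ) := by exact_mod_cast hcard
      _ = ((2 * N + 1 : ℕ) : ℝ) ^ n := by push_cast; ring
      _ ≤ _ := h4
  · -- covering
    intro v hv hvr
    set x : V := ⟨v, hv⟩ with hx
    set t : Fin n → ℝ := fun i => bV.repr x i with ht
    set k : Fin n → ℤ := fun i => ⌊t i / step⌋ with hk
    have hNstep : K * r ≤ (N : ℝ) * step := by
      have h := Nat.le_ceil (K * r / step)
      rw [← hN] at h
      calc K * r = K * r / step * step := by field_simp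
        _ ≤ (N : ℝ) * step := by nlinarith
    have hti : ∀ i, |t i| ≤ K * r := by
      intro i
      have h := hKbound x i
      have hxn : ‖x‖ = ‖v‖ := rfl
      simp only [Basis.coord_apply] at h
      calc |t i| ≤ K * ‖x‖ := h
        _ ≤ K * r := by rw [hxn]; nlinarith
    have hkmem : k ∈ Fintype.piFinset fun _ : Fin n => Finset.Icc (-(N:ℤ)) (N:ℤ) := by
      rw [Fintype.mem_piFinset]
      intro i
      have habs := abs_le.1 (hti i)
      rw [Finset.mem_Icc]
      constructor
      · apply Int.le_floor.2
        push_cast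
        rw [le_div_iff₀ hstep0]
        nlinarith
      · have h2 : t i / step ≤ (N : ℝ) := by
          rw [div_le_iff₀ hstep0]; nlinarith
        calc k i ≤ ⌊(N : ℝ)⌋ := Int.floor_le_floor h2
          _ = N := by exact_mod_cast Int.floor_natCast N
    refine ⟨(∑ i, ((k i : ℝ) * step) • (bV i : E)), Finset.mem_image_of_mem _ hkmem, ?_⟩
    have hvsum : v = ∑ i, t i • (bV i : E) := by
      have h2 : ((∑ i, bV.repr x i • bV i : V) : E) = v := by
        rw [bV.sum_repr x]
      rw [← h2]
      push_cast
      rfl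
    have hterm : ∀ i ∈ Finset.univ, ‖t i • (bV i : E) - ((k i : ℝ) * step) • (bV i : E)‖
        ≤ step * ‖(bV i : E)‖ := by
      intro i _
      rw [← sub_smul, norm_smul]
      have h1 : (k i : ℝ) ≤ t i / step := Int.floor_le _
      have h2 : t i / step - 1 < (k i : ℝ) := Int.sub_one_lt_floor _
      have hA : (k i : ℝ) * step ≤ t i := (le_div_iff₀ hstep0).1 h1
      have hB : t i < ((k i : ℝ) + 1) * step := (div_lt_iff₀ hstep0).1 (by linarith)
      have h3 : |t i - (k i : ℝ) * step| ≤ step := abs_le.2 ⟨by nlinarith, by nlinarith⟩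
      rw [Real.norm_eq_abs]
      nlinarith [norm_nonneg (bV i : E)]
    have h5 := norm_sum_le_of_le Finset.univ hterm
    have h6 : ∑ i, step * ‖(bV i : E)‖ ≤ ε := by
      rw [← Finset.mul_sum]
      have h7 : ∑ i, ‖(bV i : E)‖ ≤ M := by simp only [hM]; linarith
      calc step * ∑ i, ‖(bV i : E)‖ ≤ step * M := by nlinarith
        _ = ε := by rw [hstep]; field_simp
    rw [hvsum, ← Finset.sum_sub_distrib]
    linarith

noncomputable def lift0 {d : ℕ} : (Fin d → ℝ) →ₗ[ℝ] (Fin (d+1) → ℝ) where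
  toFun w := Fin.cons 0 w
  map_add' u v := by
    ext i
    refine Fin.cases ?_ ?_ i <;> simp
  map_smul' c u := by
    ext i
    refine Fin.cases ?_ ?_ i <;> simp

lemma lift0_inj {d : ℕ} : Function.Injective (lift0 (d := d)) := by
  intro u v huv
  ext j
  have : (lift0 u) j.succ = (lift0 v) j.succ := by rw [huv]
  simpa [lift0] using this

lemma lift0_zero_coord {d : ℕ} (u : Fin d → ℝ) : (lift0 u) 0 = 0 := rfl

lemma key_struct {d a b : ℕ}
    (A B : AffineSubspace ℝ (Fin d → ℝ)) (hBA : B ≤ A)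
    (hBne : (B : Set (Fin d → ℝ)).Nonempty)
    (hb : Module.finrank ℝ B.direction = b)
    (ha : Module.finrank ℝ A.direction = a)
    (hba : b ≤ a) :
    ∃ (W : Submodule ℝ (Fin (d+1) → ℝ)) (β₀ : Fin (d+1) → ℝ) (K : ℝ),
      Module.finrank ℝ W = a - b ∧ β₀ ∈ spanLift B ∧ β₀ 0 = 1 ∧ 0 ≤ K ∧
      ∀ u ∈ spanLift A, ∃ v ∈ spanLift B, ∃ w ∈ W, u = v + w ∧ ‖w‖ ≤ K * ‖u‖ := by
  classical
  obtain ⟨w₀, hw₀⟩ := hBne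
  set β₀ : Fin (d+1) → ℝ := lift1 w₀ with hβ₀
  have hβ₀B : β₀ ∈ spanLift B := Submodule.subset_span ⟨w₀, hw₀, rfl⟩
  have hβ00 : β₀ 0 = 1 := rfl
  set p := B.direction with hp
  set q := A.direction with hq
  have hpq : p ≤ q := AffineSubspace.direction_le hBA
  set p' : Submodule ℝ q := p.comap q.subtype with hp'
  obtain ⟨w', hc⟩ := Submodule.exists_isCompl p'
  set W₀ : Submodule ℝ (Fin d → ℝ) := w'.map q.subtype with hW₀
  set W : Submodule ℝ (Fin (d+1) → ℝ) := W₀.map lift0 with hW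
  -- finrank computations
  have hrk1 : finrank ℝ p' + finrank ℝ w' = finrank ℝ q := Submodule.finrank_add_eq_of_isCompl hc
  have hmapp' : Submodule.map q.subtype p' = p := by
    rw [hp', Submodule.map_comap_subtype, inf_eq_right.2 hpq]
  have hrkp' : finrank ℝ p' = b := by
    have e := Submodule.finrank_map_subtype_eq q p'
    rw [hmapp'] at e
    rw [← e, hb]
  have hrkw' : finrank ℝ w' = a - b := by
    rw [hrkp', ha] at hrk1
    omega
  have hrkW₀ : finrank ℝ W₀ = a - b := by
    rw [hW₀, Submodule.finrank_map_subtype_eq, hrkw']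
  have hrkW : finrank ℝ W = a - b := by
    have e := Submodule.equivMapOfInjective (lift0 (d := d)) lift0_inj W₀
    rw [← hW] at e
    rw [← e.finrank_eq, hrkW₀]
  -- q ≤ p ⊔ W₀
  have hqle : q ≤ p ⊔ W₀ := by
    intro u hu
    have hmem : (⟨u, hu⟩ : q) ∈ p' ⊔ w' := by
      rw [codisjoint_iff.1 hc.codisjoint]; trivial
    obtain ⟨y, hy, z, hz, hyz⟩ := Submodule.mem_sup.1 hmem
    refine Submodule.mem_sup.2 ⟨(y : Fin d → ℝ), hy, (z : Fin d → ℝ),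
      Submodule.mem_map_of_mem hz, ?_⟩
    have : ((y + z : q) : Fin d → ℝ) = u := by rw [hyz]
    simpa using this
  -- disjointness of p and W₀
  have hdisj0 : ∀ x, x ∈ p → x ∈ W₀ → x = 0 := by
    intro x hxp hxW
    obtain ⟨y, hy, rfl⟩ := hxW
    have hy' : y ∈ p' := by
      rw [hp', Submodule.mem_comap]; exact hxp
    have : y = 0 := Submodule.disjoint_def.1 hc.disjoint y hy' hy
    rw [this]; simp
  -- lift0 of direction elements lies in spanLift B
  have hlift0B : ∀ u ∈ p, lift0 u ∈ spanLift B := by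
    intro u hu
    have hmem : u +ᵥ w₀ ∈ B := AffineSubspace.vadd_mem_of_mem_direction hu hw₀
    have h1 : lift1 (u +ᵥ w₀) ∈ spanLift B := Submodule.subset_span ⟨_, hmem, rfl⟩
    have heq : lift0 u = lift1 (u +ᵥ w₀) - β₀ := by
      funext i
      refine Fin.cases ?_ ?_ i
      · show (0:ℝ) = 1 - 1; ring
      · intro j
        show u j = (u +ᵥ w₀) j - w₀ j
        simp [vadd_eq_add]
    rw [heq]
    exact sub_mem h1 hβ₀B
  -- spanLift A ≤ spanLift B ⊔ W
  have hAsub : spanLift A ≤ spanLift B ⊔ W := by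
    rw [spanLift]
    apply Submodule.span_le.2
    rintro _ ⟨w, hw, rfl⟩
    have hw' : w - w₀ ∈ q := by
      have := AffineSubspace.vsub_mem_direction hw (hBA hw₀)
      simpa [vsub_eq_sub] using this
    obtain ⟨y, hy, z, hz, hyz⟩ := Submodule.mem_sup.1 (hqle hw')
    have heq : lift1 w = (β₀ + lift0 y) + lift0 z := by
      funext i
      refine Fin.cases ?_ ?_ i
      · show (1:ℝ) = 1 + 0 + 0; ring
      · intro j
        show w j = w₀ j + y j + z j
        have h := congrFun hyz j
        simp only [Pi.add_apply, Pi.sub_apply] at h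
        linarith
    rw [heq]
    exact Submodule.add_mem _
      (Submodule.mem_sup_left (add_mem hβ₀B (hlift0B y hy)))
      (Submodule.mem_sup_right (Submodule.mem_map_of_mem hz))
  -- structure of spanLift B elements
  have hBdec : ∀ x ∈ spanLift B, ∃ u ∈ p, x = (x 0) • β₀ + lift0 u := by
    intro x hx
    induction hx using Submodule.span_induction with
    | mem y hy =>
      obtain ⟨w, hw, rfl⟩ := hy
      refine ⟨w - w₀, ?_, ?_⟩
      · have := AffineSubspace.vsub_mem_direction hw hw₀
        simpa [vsub_eq_sub] using this
      · funext i
        refine Fin.cases ?_ ?_ i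
        · show (1:ℝ) = (1:ℝ) * 1 + 0
          ring
        · intro j
          show w j = (1:ℝ) * w₀ j + (w j - w₀ j)
          ring
    | zero => exact ⟨0, zero_mem _, by simp⟩
    | add y z hy hz ihy ihz =>
      obtain ⟨uy, huy, hey⟩ := ihy
      obtain ⟨uz, huz, hez⟩ := ihz
      refine ⟨uy + uz, add_mem huy huz, ?_⟩
      have h0 : (y + z) 0 = y 0 + z 0 := rfl
      rw [h0, add_smul, map_add]
      conv_lhs => rw [hey, hez]
      module
    | smul c y hy ihy =>
      obtain ⟨uy, huy, hey⟩ := ihy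
      refine ⟨c • uy, Submodule.smul_mem _ c huy, ?_⟩
      have h0 : (c • y) 0 = c * y 0 := rfl
      rw [h0, map_smul]
      conv_lhs => rw [hey]
      module
  -- disjointness of spanLift B and W
  have hdisj : Disjoint (spanLift B) W := by
    rw [Submodule.disjoint_def]
    intro x hxB hxW
    obtain ⟨u, hu, hxu⟩ := hBdec x hxB
    obtain ⟨z, hz, hxz⟩ := hxW
    have hx0 : x 0 = 0 := by rw [← hxz]; rfl
    have hxu' : x = lift0 u := by rw [hxu, hx0]; simp
    have huz : u = z := lift0_inj (by rw [← hxu', hxz])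
    have : u = 0 := hdisj0 u hu (huz ▸ hz)
    rw [hxu', this]; simp
  -- complement and projection
  obtain ⟨C₀, hC₀⟩ := Submodule.exists_isCompl (spanLift B ⊔ W)
  have hcompl : IsCompl (spanLift B ⊔ C₀) W := by
    constructor
    · rw [Submodule.disjoint_def]
      intro x hx hxW
      obtain ⟨β, hβ, c, hc', hβc⟩ := Submodule.mem_sup.1 hx
      have hc0 : c ∈ (spanLift B ⊔ W) ⊓ C₀ := by
        constructor
        · have : c = x - β := by rw [← hβc]; ring
          rw [this]
          exact Submodule.sub_mem _ (Submodule.mem_sup_right hxW) (Submodule.mem_sup_left hβ)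
        · exact hc'
      have hc00 : c = 0 := by
        have := hC₀.disjoint
        rw [Submodule.disjoint_def] at this
        exact this c hc0.1 hc0.2
      have hxβ : x = β := by rw [← hβc, hc00]; ring
      rw [Submodule.disjoint_def] at hdisj
      exact hdisj x (hxβ ▸ hβ) hxW
    · rw [codisjoint_iff]
      rw [sup_right_comm]
      rw [codisjoint_iff.1 hC₀.codisjoint]
  set π : (Fin (d+1) → ℝ) →ₗ[ℝ] W := W.linearProjOfIsCompl _ hcompl.symm with hπ
  set πE : (Fin (d+1) → ℝ) →ₗ[ℝ] (Fin (d+1) → ℝ) := W.subtype ∘ₗ π with hπE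
  set K : ℝ := ‖LinearMap.toContinuousLinearMap πE‖ with hKdef
  have hK0 : 0 ≤ K := ContinuousLinearMap.opNorm_nonneg _
  have hπb : ∀ x, ‖πE x‖ ≤ K * ‖x‖ := by
    intro x
    simpa using (LinearMap.toContinuousLinearMap πE).le_opNorm x
  refine ⟨W, β₀, K, hrkW, hβ₀B, hβ00, hK0, ?_⟩
  intro u hu
  obtain ⟨v, hv, w, hw, hvw⟩ := Submodule.mem_sup.1 (hAsub hu)
  have hπv : πE v = 0 := by
    have : π v = 0 :=
      Submodule.linearProjOfIsCompl_apply_right hcompl.symm ⟨v, Submodule.mem_sup_left hv⟩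
    simp [hπE, this]
  have hπw : πE w = w := by
    have : π w = ⟨w, hw⟩ := Submodule.linearProjOfIsCompl_apply_left hcompl.symm ⟨w, hw⟩
    simp [hπE, this]
  have hπu : πE u = w := by
    rw [← hvw, map_add, hπv, hπw, zero_add]
  refine ⟨v, hv, w, hw, hvw.symm, ?_⟩
  rw [← hπu]
  exact hπb u

theorem pi_covered_by_half_omega_translates
    (d a b : ℕ) (hd : 1 ≤ d) (R : ℝ) (hR : 1 ≤ R) (γ : ℝ) (hγ : 0 < γ)
    (ψ φ : ℝ → ℝ)
    (hψpos : ∀ T, 1 ≤ T → 0 < ψ T) (hφpos : ∀ T, 1 ≤ T → 0 < φ T)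
    (hψanti : ∀ T₁ T₂, 1 ≤ T₁ → T₁ ≤ T₂ → ψ T₂ ≤ ψ T₁)
    (hφanti : ∀ T₁ T₂, 1 ≤ T₁ → T₁ ≤ T₂ → φ T₂ ≤ φ T₁)
    (hφψ : ∀ T, 1 ≤ T → φ T ≤ ψ T)
    (A B : AffineSubspace ℝ (Fin d → ℝ)) (hBA : B ≤ A)
    (hBne : (B : Set (Fin d → ℝ)).Nonempty)
    (hb : Module.finrank ℝ B.direction = b)
    (ha : Module.finrank ℝ A.direction = a)
    (hba : b < a) (had : a ≤ d) :
    ∃ C > (0:ℝ), ∀ T : ℝ, 1 ≤ T →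
      ∃ S : Finset (Fin (d+1) → ℝ),
        (S.card : ℝ) ≤ C * (T / ψ (R * T)) ^ (a - b) ∧
        PiSet A φ R T ⊆
          ⋃ c ∈ S, {y | ∃ z ∈ OmegaSet B ψ R T γ, y = (1/2 : ℝ) • z + c} := by
  classical
  obtain ⟨W, β₀, K, hrkW, hβ₀B, hβ00, hK0, Hdec⟩ := key_struct A B hBA hBne hb ha hba.le
  obtain ⟨κB, hκB1, hNB⟩ := net_lemma _ (spanLift B)
  obtain ⟨κW, hκW1, hNW⟩ := net_lemma _ W
  obtain ⟨κE, hκE1, hNE⟩ := net_lemma _ (⊤ : Submodule ℝ (Fin (d+1) → ℝ))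
  set M₁ : ℝ := ‖β₀‖ with hM₁def
  have hM₁ : 1 ≤ M₁ := by
    calc (1:ℝ) = |β₀ 0| := by rw [hβ00]; norm_num
      _ ≤ ‖β₀‖ := by simpa [Real.norm_eq_abs] using norm_le_pi_norm β₀ 0
  set m : ℝ := min (1/12 : ℝ) (1/(6*(1+M₁))) with hmdef
  have hm0 : 0 < m := lt_min (by norm_num) (by positivity)
  have hm12 : m ≤ 1/12 := min_le_left _ _
  have hmM : 6 * m * (1 + M₁) ≤ 1 := by
    have h2 := min_le_right (1/12 : ℝ) (1/(6*(1+M₁)))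
    have h1 : (0:ℝ) < 6*(1+M₁) := by positivity
    rw [le_div_iff₀ h1] at h2
    linarith
  set ψ₁ : ℝ := ψ 1 with hψ₁def
  have hψ₁ : 0 < ψ₁ := hψpos 1 le_rfl
  set C₀ : ℝ := R + 2*ψ₁ with hC₀def
  have hC₀ : 0 < C₀ := by positivity
  set PB : ℝ := (1+K)*C₀ with hPBdef
  have hPB : 0 < PB := by positivity
  set CB : ℝ := (κB * (PB/m + 1)) ^ (Module.finrank ℝ (spanLift B)) with hCBdef
  have hCB0 : 0 < CB := by positivity
  set EW : ℝ := κW * (4*K*C₀/γ + K*C₀*ψ₁/m + ψ₁) with hEWdef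
  have hEW0 : 0 < EW := by positivity
  set CW : ℝ := EW ^ (a-b) with hCWdef
  have hCW0 : 0 < CW := by positivity
  set cE : ℝ := 8/γ + 2*ψ₁/m with hcEdef
  have hcE0 : 0 < cE := by positivity
  set CE : ℝ := (κE * (cE + 1)) ^ (Module.finrank ℝ (⊤ : Submodule ℝ (Fin (d+1) → ℝ)))
    with hCEdef
  have hCE0 : 0 < CE := by positivity
  refine ⟨CB*CW*CE, by positivity, ?_⟩
  intro T hT
  have hT0 : 0 < T := lt_of_lt_of_le one_pos hT
  have hTRT : T ≤ R*T := by
    calc T = 1*T := by ring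
      _ ≤ R*T := mul_le_mul_of_nonneg_right hR hT0.le
  have hRT : 1 ≤ R*T := le_trans hT hTRT
  set Ψ : ℝ := ψ (R*T) with hΨdef
  have hΨ0 : 0 < Ψ := hψpos _ hRT
  have hΨψ₁ : Ψ ≤ ψ₁ := hψanti 1 (R*T) le_rfl hRT
  have hΦ0 : 0 < φ (R*T) := hφpos _ hRT
  have hΦΨ : φ (R*T) ≤ Ψ := hφψ _ hRT
  set εs : ℝ := min (γ*Ψ/4) (m*T) with hεsdef
  have hεs0 : 0 < εs := lt_min (by positivity) (by positivity)
  obtain ⟨SB, hSBsub, hSBcard, hSBnet⟩ := hNB (PB*T) (m*T) (by positivity) (by positivity)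
  obtain ⟨SW, hSWsub, hSWcard, hSWnet⟩ := hNW (K*C₀*T) εs hεs0 (by positivity)
  obtain ⟨SE, hSEsub, hSEcard, hSEnet⟩ := hNE (2*Ψ) εs hεs0 (by positivity)
  set S : Finset (Fin (d+1) → ℝ) := ((SB ×ˢ SW) ×ˢ SE).image
    (fun pr => pr.1.1 + pr.1.2 + pr.2 - (3*m*T) • β₀) with hSdef
  have hTΨ : 1 ≤ ψ₁ * (T/Ψ) := by
    have hΨT : Ψ ≤ ψ₁ * T := by
      have h9 : ψ₁ * 1 ≤ ψ₁ * T := mul_le_mul_of_nonneg_left hT hψ₁.le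
      linarith
    rw [mul_div_assoc', le_div_iff₀ hΨ0]
    linarith
  refine ⟨S, ?_, ?_⟩
  · -- cardinality
    have hSBc : (SB.card : ℝ) ≤ CB := by
      have h1 : (PB*T)/(m*T) = PB/m := by
        rw [mul_div_mul_right _ _ hT0.ne']
      rw [h1] at hSBcard
      exact hSBcard
    have hSWc : (SW.card : ℝ) ≤ CW * (T/Ψ)^(a-b) := by
      have h1 : (K*C₀*T)/εs ≤ 4*K*C₀/γ*(T/Ψ) + K*C₀/m := by
        rcases min_cases (γ*Ψ/4) (m*T) with ⟨heq, -⟩ | ⟨heq, -⟩ <;> rw [hεsdef, heq]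
        · have h2 : (K*C₀*T)/(γ*Ψ/4) = 4*K*C₀/γ*(T/Ψ) := by
            field_simp
          rw [h2]
          have : (0:ℝ) ≤ K*C₀/m := by positivity
          linarith
        · have h2 : (K*C₀*T)/(m*T) = K*C₀/m := by
            rw [mul_div_mul_right _ _ hT0.ne']
          rw [h2]
          have : (0:ℝ) ≤ 4*K*C₀/γ*(T/Ψ) := by positivity
          linarith
      have h3 : κW * ((K*C₀*T)/εs + 1) ≤ EW * (T/Ψ) := by
        have h4 : K*C₀/m ≤ K*C₀*ψ₁/m * (T/Ψ) := by
          have h5 : (0:ℝ) ≤ K*C₀/m := by positivity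
          have h6 : K*C₀*ψ₁/m * (T/Ψ) = (K*C₀/m) * (ψ₁ * (T/Ψ)) := by ring
          rw [h6]
          calc K*C₀/m = (K*C₀/m) * 1 := by ring
            _ ≤ (K*C₀/m) * (ψ₁ * (T/Ψ)) := mul_le_mul_of_nonneg_left hTΨ h5
        have h7 : (K*C₀*T)/εs + 1 ≤ (4*K*C₀/γ + K*C₀*ψ₁/m + ψ₁)*(T/Ψ) := by
          have hexp : (4*K*C₀/γ + K*C₀*ψ₁/m + ψ₁)*(T/Ψ)
              = 4*K*C₀/γ*(T/Ψ) + K*C₀*ψ₁/m*(T/Ψ) + ψ₁*(T/Ψ) := by ring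
          rw [hexp]
          linarith
        calc κW * ((K*C₀*T)/εs + 1)
            ≤ κW * ((4*K*C₀/γ + K*C₀*ψ₁/m + ψ₁)*(T/Ψ)) :=
              mul_le_mul_of_nonneg_left h7 (by linarith)
          _ = EW * (T/Ψ) := by rw [hEWdef]; ring
      rw [hrkW] at hSWcard
      calc (SW.card : ℝ) ≤ (κW * ((K*C₀*T)/εs + 1))^(a-b) := hSWcard
        _ ≤ (EW * (T/Ψ))^(a-b) := by
            apply pow_le_pow_left₀ (by positivity) h3
        _ = CW * (T/Ψ)^(a-b) := by rw [hCWdef, mul_pow]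
    have hSEc : (SE.card : ℝ) ≤ CE := by
      have h1 : (2*Ψ)/εs ≤ cE := by
        rcases min_cases (γ*Ψ/4) (m*T) with ⟨heq, -⟩ | ⟨heq, -⟩ <;> rw [hεsdef, heq, hcEdef]
        · have h2 : (2*Ψ)/(γ*Ψ/4) = 8/γ := by
            field_simp
            ring
          rw [h2]
          have : (0:ℝ) ≤ 2*ψ₁/m := by positivity
          linarith
        · have h2 : (2*Ψ)/(m*T) ≤ 2*ψ₁/m := by
            rw [div_le_div_iff₀ (by positivity) (by positivity)]
            have e1 : 2*Ψ*m ≤ 2*ψ₁*m := by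
              linarith [mul_le_mul_of_nonneg_right hΨψ₁ hm0.le]
            have e2 : 2*ψ₁*m ≤ 2*ψ₁*(m*T) := by
              linarith [mul_le_mul_of_nonneg_left hT (mul_pos hψ₁ hm0).le]
            linarith
          have : (0:ℝ) ≤ 8/γ := by positivity
          linarith
      calc (SE.card : ℝ) ≤ (κE * ((2*Ψ)/εs + 1))^(Module.finrank ℝ (⊤ : Submodule ℝ (Fin (d+1) → ℝ))) := hSEcard
        _ ≤ CE := by
            rw [hCEdef]
            apply pow_le_pow_left₀ (by positivity)
            exact mul_le_mul_of_nonneg_left (by linarith) (by linarith)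
    have hc1 : S.card ≤ SB.card * SW.card * SE.card := by
      calc S.card ≤ ((SB ×ˢ SW) ×ˢ SE).card := Finset.card_image_le
        _ = SB.card * SW.card * SE.card := by
            rw [Finset.card_product, Finset.card_product]
    calc (S.card : ℝ) ≤ ((SB.card * SW.card * SE.card : ℕ) : ℝ) := by exact_mod_cast hc1
      _ = (SB.card : ℝ) * (SW.card : ℝ) * (SE.card : ℝ) := by push_cast; ring
      _ ≤ CB * (CW * (T/Ψ)^(a-b)) * CE := by
          apply mul_le_mul _ hSEc (Nat.cast_nonneg _) (by positivity)
          apply mul_le_mul hSBc hSWc (Nat.cast_nonneg _) hCB0.le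
      _ = CB*CW*CE * (T/Ψ)^(a-b) := by ring
  · -- coverage
    intro y hy
    simp only [PiSet, Set.mem_setOf_eq] at hy
    obtain ⟨hy0, hyT, hyj, hydist⟩ := hy
    have hynorm : ‖y‖ ≤ R*T := by
      rw [pi_norm_le_iff_of_nonneg (by positivity)]
      intro i
      refine Fin.cases ?_ ?_ i
      · rw [Real.norm_eq_abs, abs_of_nonneg hy0]
        linarith [hTRT]
      · intro j
        rw [Real.norm_eq_abs]
        exact hyj j
    have hAne : ((spanLift A : Set (Fin (d+1) → ℝ))).Nonempty := ⟨0, Submodule.zero_mem _⟩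
    have hlt : Metric.infDist y (spanLift A : Set (Fin (d+1) → ℝ)) < 2*φ (R*T) :=
      lt_of_le_of_lt hydist (by linarith)
    obtain ⟨u, hu, hdu⟩ := (Metric.infDist_lt_iff hAne).1 hlt
    set e : Fin (d+1) → ℝ := y - u with hedef
    have he2 : ‖e‖ ≤ 2*Ψ := by
      rw [hedef, ← dist_eq_norm]
      linarith [hdu.le]
    have hun : ‖u‖ ≤ C₀*T := by
      have h1 : ‖u‖ ≤ ‖y‖ + ‖e‖ := by
        have h2 : u = y - e := by rw [hedef]; abel
        calc ‖u‖ = ‖y - e‖ := by rw [h2]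
          _ ≤ ‖y‖ + ‖e‖ := norm_sub_le _ _
      have h3 : ψ₁ ≤ ψ₁ * T := by
        have h9 : ψ₁ * 1 ≤ ψ₁ * T := mul_le_mul_of_nonneg_left hT hψ₁.le
        linarith
      rw [hC₀def]
      linarith
    obtain ⟨v, hv, w, hw, huvw, hwK⟩ := Hdec u hu
    have hwn : ‖w‖ ≤ K*C₀*T := by
      calc ‖w‖ ≤ K * ‖u‖ := hwK
        _ ≤ K*(C₀*T) := mul_le_mul_of_nonneg_left hun hK0
        _ = K*C₀*T := by ring
    have hvn : ‖v‖ ≤ PB*T := by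
      have h1 : v = u - w := by rw [huvw]; abel
      have h2 : ‖v‖ ≤ ‖u‖ + ‖w‖ := by
        rw [h1]
        exact norm_sub_le _ _
      rw [hPBdef]
      linarith
    obtain ⟨v', hv'S, hv'⟩ := hSBnet v hv hvn
    obtain ⟨w', hw'S, hw'⟩ := hSWnet w hw hwn
    obtain ⟨e', he'S, he'⟩ := hSEnet e trivial he2
    set c : Fin (d+1) → ℝ := v' + w' + e' - (3*m*T) • β₀ with hcdef
    have hcS : c ∈ S := by
      rw [hSdef, hcdef]
      exact Finset.mem_image.2 ⟨((v', w'), e'),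
        Finset.mem_product.2 ⟨Finset.mem_product.2 ⟨hv'S, hw'S⟩, he'S⟩, rfl⟩
    have hX : y - c = (v - v') + (w - w') + (e - e') + (3*m*T) • β₀ := by
      have h1 : v + w + e = y := by rw [← huvw, hedef]; abel
      rw [hcdef, ← h1]
      abel
    -- bounds
    have hD1 : ‖v - v'‖ ≤ m*T := hv'
    have hD2m : ‖w - w'‖ ≤ m*T := le_trans hw' (min_le_right _ _)
    have hD2γ : ‖w - w'‖ ≤ γ*Ψ/4 := le_trans hw' (min_le_left _ _)
    have hD3m : ‖e - e'‖ ≤ m*T := le_trans he' (min_le_right _ _)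
    have hD3γ : ‖e - e'‖ ≤ γ*Ψ/4 := le_trans he' (min_le_left _ _)
    have hXnorm : ‖y - c‖ ≤ 3*m*T*(1+M₁) := by
      rw [hX]
      have h1 : ‖(3*m*T) • β₀‖ = 3*m*T*M₁ := by
        rw [norm_smul, Real.norm_eq_abs, abs_of_nonneg (by positivity), hM₁def]
      calc ‖(v - v') + (w - w') + (e - e') + (3*m*T) • β₀‖
          ≤ ‖(v - v') + (w - w') + (e - e')‖ + ‖(3*m*T) • β₀‖ := norm_add_le _ _
        _ ≤ (‖(v - v') + (w - w')‖ + ‖e - e'‖) + ‖(3*m*T) • β₀‖ := by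
            have := norm_add_le ((v - v') + (w - w')) (e - e')
            linarith
        _ ≤ ((‖v - v'‖ + ‖w - w'‖) + ‖e - e'‖) + ‖(3*m*T) • β₀‖ := by
            have := norm_add_le (v - v') (w - w')
            linarith
        _ ≤ 3*m*T*(1+M₁) := by
            rw [h1]
            linarith
    have hX0 : 0 ≤ (y - c) 0 ∧ (y - c) 0 ≤ 6*m*T := by
      have h1 := congrFun hX 0
      simp only [Pi.add_apply, Pi.smul_apply, smul_eq_mul] at h1
      rw [hβ00] at h1
      have h2 : |(v - v') 0| ≤ m*T := by
        have := norm_le_pi_norm (v - v') 0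
        rw [Real.norm_eq_abs] at this
        exact le_trans this hD1
      have h3 : |(w - w') 0| ≤ m*T := by
        have := norm_le_pi_norm (w - w') 0
        rw [Real.norm_eq_abs] at this
        exact le_trans this hD2m
      have h4 : |(e - e') 0| ≤ m*T := by
        have := norm_le_pi_norm (e - e') 0
        rw [Real.norm_eq_abs] at this
        exact le_trans this hD3m
      have h2' := abs_le.1 h2
      have h3' := abs_le.1 h3
      have h4' := abs_le.1 h4
      constructor
      · linarith [h1]
      · linarith [h1]
    -- result
    rw [Set.mem_iUnion₂]
    refine ⟨c, hcS, ?_⟩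
    refine ⟨(2:ℝ) • (y - c), ?_, ?_⟩
    · -- membership in OmegaSet
      simp only [OmegaSet, Set.mem_setOf_eq]
      have hz0 : ((2:ℝ) • (y - c)) 0 = 2 * (y - c) 0 := rfl
      refine ⟨?_, ?_, ?_, ?_⟩
      · rw [hz0]; linarith [hX0.1]
      · rw [hz0]
        have h9 : 12*m*T ≤ T := by
          have h8 : (12*m)*T ≤ 1*T := mul_le_mul_of_nonneg_right (by linarith) hT0.le
          linarith
        linarith [hX0.2, h9]
      · intro j
        have h1 : |((2:ℝ) • (y - c)) j.succ| = 2 * |(y - c) j.succ| := by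
          rw [show ((2:ℝ) • (y - c)) j.succ = 2 * (y - c) j.succ from rfl, abs_mul]
          norm_num
        rw [h1]
        have h2 : |(y - c) j.succ| ≤ ‖y - c‖ := by
          have := norm_le_pi_norm (y - c) j.succ
          rwa [Real.norm_eq_abs] at this
        have h3 : 6*m*T*(1+M₁) ≤ T := by
          have h8 : (6*m*(1+M₁))*T ≤ 1*T := mul_le_mul_of_nonneg_right hmM hT0.le
          linarith [h8]
        linarith [h2, hXnorm, h3, hTRT]
      · -- distance to spanLift B
        have hmem : ((2:ℝ) • ((v - v') + (3*m*T) • β₀)) ∈ spanLift B := by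
          apply Submodule.smul_mem
          apply Submodule.add_mem
          · exact Submodule.sub_mem _ hv (hSBsub hv'S)
          · exact Submodule.smul_mem _ _ hβ₀B
        have hdiff : (2:ℝ) • (y - c) - (2:ℝ) • ((v - v') + (3*m*T) • β₀)
            = (2:ℝ) • ((w - w') + (e - e')) := by
          rw [hX]
          module
        calc Metric.infDist ((2:ℝ) • (y - c)) (spanLift B : Set (Fin (d+1) → ℝ))
            ≤ dist ((2:ℝ) • (y - c)) ((2:ℝ) • ((v - v') + (3*m*T) • β₀)) :=
              Metric.infDist_le_dist_of_mem hmem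
          _ = ‖(2:ℝ) • ((w - w') + (e - e'))‖ := by rw [dist_eq_norm, hdiff]
          _ ≤ 2 * (‖w - w'‖ + ‖e - e'‖) := by
              rw [norm_smul]
              have := norm_add_le (w - w') (e - e')
              norm_num
              linarith [this]
          _ ≤ γ * Ψ := by linarith [hD2γ, hD3γ]
    · -- the equation
      rw [smul_smul]
      norm_num
end

section
/- Let d ≥ 1, let a be an integer with 1 ≤ a ≤ d, let R ≥ 1 and Δ > 1/a. Define ψ(T) = T^{−1/d} and φ(T) = T^{−1/d}·(log T)^{−Δ} for T ≥ 2. Then the series ∑_{T=2}^{∞} (T/ψ(RT))^{a} · [ (φ(RT)/T)^a − (φ(R(T+1))/(T+1))^a ] converges, i.e. ∑_{T=2}^{∞} T^{a(1+1/d)} R^{a/d} · [ ((RT)^{−1/d}(log(RT))^{−Δ}/T)^a − ((R(T+1))^{−1/d}(log(R(T+1)))^{−Δ}/(T+1))^a ] < ∞. -/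
open Real

lemma telescope_summable {h : ℕ → ℝ} (hanti : ∀ n, h (n+1) ≤ h n) (hnn : ∀ n, 0 ≤ h n) :
    Summable (fun n => h n - h (n+1)) := by
  apply summable_of_sum_range_le (c := h 0) (fun n => by linarith [hanti n])
  intro n
  rw [Finset.sum_range_sub' h n]
  linarith [hnn n]

lemma bernoulli_neg {t ε : ℝ} (ht0 : 0 < t) (hε : 0 ≤ ε) :
    1 + ε * (1 - t) ≤ t ^ (-ε) := by
  have h1 : t ^ (-ε) = Real.exp (ε * (-Real.log t)) := by
    rw [Real.rpow_def_of_pos ht0]; ring_nf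
  rw [h1]
  have h2 : 1 - t ≤ -Real.log t := by
    have := Real.log_le_sub_one_of_pos ht0; linarith
  have h3 : ε * (1 - t) ≤ ε * (-Real.log t) := by nlinarith
  have := Real.add_one_le_exp (ε * (-Real.log t))
  linarith

lemma bertrand_summable {s : ℝ} (hs : 1 < s) :
    Summable (fun n : ℕ => 1 / (((n:ℝ)+2) * (Real.log ((n:ℝ)+2)) ^ s)) := by
  set ε := s - 1 with hεdef
  have hε : 0 < ε := by simp [hεdef]; linarith
  set h : ℕ → ℝ := fun n => (Real.log ((n:ℝ)+2)) ^ (-ε) with hh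
  have hlogpos : ∀ n : ℕ, 0 < Real.log ((n:ℝ)+2) := by
    intro n; apply Real.log_pos; push_cast; linarith [Nat.cast_nonneg (α := ℝ) n]
  have hanti : ∀ n, h (n+1) ≤ h n := by
    intro n
    have h1 : Real.log ((n:ℝ)+2) ≤ Real.log ((n:ℝ)+1+2) := by
      apply Real.log_le_log (by linarith [Nat.cast_nonneg (α := ℝ) n]); linarith
    simp only [hh]
    rw [Real.rpow_neg (hlogpos n).le, Real.rpow_neg (le_trans (hlogpos n).le (by push_cast at h1 ⊢; linarith))]
    apply inv_anti₀ (Real.rpow_pos_of_pos (hlogpos n) ε)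
    apply Real.rpow_le_rpow (hlogpos n).le (by push_cast at h1 ⊢; linarith) hε.le
  have hnn : ∀ n, 0 ≤ h n := fun n => Real.rpow_nonneg (hlogpos n).le _
  have hsum : Summable (fun n => (2 * 2 ^ s / ε) * (h n - h (n+1))) :=
    (telescope_summable hanti hnn).mul_left _
  apply Summable.of_nonneg_of_le _ _ hsum
  · intro n
    have := hlogpos n
    positivity
  · intro n
    set u := Real.log ((n:ℝ)+2) with hu
    set v := Real.log ((n:ℝ)+3) with hv
    have hN : (0:ℝ) ≤ (n:ℝ) := Nat.cast_nonneg n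
    have hu0 : 0 < u := hlogpos n
    have huv : u ≤ v := Real.log_le_log (by linarith) (by linarith)
    have hv2u : v ≤ 2 * u := by
      have : ((n:ℝ)+3) ≤ ((n:ℝ)+2)^2 := by nlinarith
      calc v ≤ Real.log (((n:ℝ)+2)^2) := Real.log_le_log (by linarith) this
        _ = 2 * u := by rw [Real.log_pow]; push_cast; ring
    have hvu : 1/((n:ℝ)+3) ≤ v - u := by
      have h1 : Real.log (((n:ℝ)+2)/((n:ℝ)+3)) ≤ ((n:ℝ)+2)/((n:ℝ)+3) - 1 :=
        Real.log_le_sub_one_of_pos (by positivity)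
      rw [Real.log_div (by linarith) (by linarith)] at h1
      rw [div_sub_one (by linarith : ((n:ℝ)+3) ≠ 0)] at h1
      have : ((n:ℝ)+2 - ((n:ℝ)+3))/((n:ℝ)+3) = -(1/((n:ℝ)+3)) := by ring
      rw [this] at h1
      simp only [hu, hv] at *
      linarith
    have hv0 : 0 < v := lt_of_lt_of_le hu0 huv
    have hus : (0:ℝ) < u ^ s := Real.rpow_pos_of_pos hu0 s
    have hvs : (0:ℝ) < v ^ s := Real.rpow_pos_of_pos hv0 s
    have h2s : (0:ℝ) < (2:ℝ) ^ s := Real.rpow_pos_of_pos (by norm_num) s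
    have ht0 : 0 < u / v := by positivity
    have hb := bernoulli_neg ht0 hε.le
    have e1 : (u/v)^(-ε) * v^(-ε) = u^(-ε) := by
      rw [← Real.mul_rpow (by positivity) hv0.le, div_mul_cancel₀ _ (ne_of_gt hv0)]
    have e2 : (1 + ε*(1-u/v)) * v^(-ε) ≤ u^(-ε) := by
      rw [← e1]; exact mul_le_mul_of_nonneg_right hb (Real.rpow_nonneg hv0.le _)
    have es : ε + 1 = s := by rw [hεdef]; ring
    have e3 : v^(-ε) / v = (v^s)⁻¹ := by
      rw [Real.rpow_neg hv0.le, div_eq_mul_inv, ← mul_inv, ← Real.rpow_add_one (ne_of_gt hv0), es]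
    have hkey : ε*(v-u)/v^s ≤ h n - h (n+1) := by
      have hr : (1 - u/v) = (v-u)*v⁻¹ := by field_simp
      have hexp : (1 + ε*(1-u/v)) * v^(-ε) = v^(-ε) + ε*(v-u) * (v^(-ε)/v) := by
        rw [hr, div_eq_mul_inv]; ring
      rw [hexp] at e2
      rw [e3] at e2
      have hhn : h n = u^(-ε) := rfl
      have hhn1 : h (n+1) = v^(-ε) := by
        simp only [hh, hv]; norm_num; ring_nf
      rw [hhn, hhn1, div_eq_mul_inv]
      linarith
    have hv2s : v^s ≤ 2^s * u^s := by
      rw [← Real.mul_rpow (by norm_num) hu0.le]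
      exact Real.rpow_le_rpow hv0.le hv2u (by linarith)
    have step1 : ε*(1/((n:ℝ)+3))/(2^s * u^s) ≤ ε*(v-u)/v^s := by
      have h3 : (0:ℝ) < 1/((n:ℝ)+3) := by positivity
      apply div_le_div₀ (by nlinarith) (by nlinarith) hvs hv2s
    have heqc : (2*2^s/ε) * (ε*(1/((n:ℝ)+3))/(2^s * u^s)) = 2/(((n:ℝ)+3)*u^s) := by
      field_simp
    have hfin : 1/(((n:ℝ)+2)*u^s) ≤ 2/(((n:ℝ)+3)*u^s) := by
      rw [div_le_div_iff₀ (by positivity) (by positivity)]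
      nlinarith
    calc 1/(((n:ℝ)+2)*u^s) ≤ 2/(((n:ℝ)+3)*u^s) := hfin
      _ = (2*2^s/ε) * (ε*(1/((n:ℝ)+3))/(2^s * u^s)) := heqc.symm
      _ ≤ (2*2^s/ε) * (ε*(v-u)/v^s) := by
          apply mul_le_mul_of_nonneg_left step1 (by positivity)
      _ ≤ (2*2^s/ε) * (h n - h (n+1)) := by
          apply mul_le_mul_of_nonneg_left hkey (by positivity)

lemma rpow_neg_anti {x y r : ℝ} (hx : 0 < x) (hxy : x ≤ y) (hr : 0 ≤ r) :
    y ^ (-r) ≤ x ^ (-r) := by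
  rw [Real.rpow_neg (le_trans hx.le hxy), Real.rpow_neg hx.le]
  exact inv_anti₀ (Real.rpow_pos_of_pos hx r) (Real.rpow_le_rpow hx.le hxy hr)

set_option maxHeartbeats 2000000 in
theorem corollary_series_converges
    (d a : ℕ) (hd : 1 ≤ d) (ha1 : 1 ≤ a) (had : a ≤ d)
    (R : ℝ) (hR : 1 ≤ R) (Δ : ℝ) (hΔ : 1 / (a : ℝ) < Δ) :
    Summable (fun T : ℕ =>
      (((T:ℝ)+2) / ((R * ((T:ℝ)+2)) ^ (-(1:ℝ)/d))) ^ a *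
        ((((R * ((T:ℝ)+2)) ^ (-(1:ℝ)/d) * (Real.log (R * ((T:ℝ)+2))) ^ (-Δ)) / ((T:ℝ)+2)) ^ a
          - (((R * ((T:ℝ)+3)) ^ (-(1:ℝ)/d) * (Real.log (R * ((T:ℝ)+3))) ^ (-Δ)) / ((T:ℝ)+3)) ^ a)) := by
  have hdR : (1:ℝ) ≤ (d:ℝ) := by exact_mod_cast hd
  have haR : (1:ℝ) ≤ (a:ℝ) := by exact_mod_cast ha1
  set p : ℝ := (a:ℝ) + (a:ℝ)/d with hp
  have hp1 : 1 ≤ p := by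
    have : 0 ≤ (a:ℝ)/d := by positivity
    simp only [hp]; linarith
  set s : ℝ := (a:ℝ)*Δ with hsdef
  have ha0 : (0:ℝ) < a := by linarith
  have hs : 1 < s := by
    rw [div_lt_iff₀ ha0] at hΔ
    simp only [hsdef]; nlinarith
  have hΔ0 : 0 < Δ := lt_trans (by positivity) hΔ
  set g : ℕ → ℝ := fun T => (Real.log (R*((T:ℝ)+2))) ^ (-s) with hg
  set c : ℕ → ℝ := fun T => ((((T:ℝ)+2))/(((T:ℝ)+3))) ^ p with hc
  have hx1 : ∀ t : ℝ, 0 ≤ t → (1:ℝ) < R*(t+2) := by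
    intro t ht; nlinarith
  have hlogpos : ∀ t : ℝ, 0 ≤ t → 0 < Real.log (R*(t+2)) := fun t ht => Real.log_pos (hx1 t ht)
  -- pointwise identity
  have hident : ∀ T : ℕ,
      (((T:ℝ)+2) / ((R * ((T:ℝ)+2)) ^ (-(1:ℝ)/d))) ^ a *
        ((((R * ((T:ℝ)+2)) ^ (-(1:ℝ)/d) * (Real.log (R * ((T:ℝ)+2))) ^ (-Δ)) / ((T:ℝ)+2)) ^ a
          - (((R * ((T:ℝ)+3)) ^ (-(1:ℝ)/d) * (Real.log (R * ((T:ℝ)+3))) ^ (-Δ)) / ((T:ℝ)+3)) ^ a)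
      = g T - c T * g (T+1) := by
    intro T
    have hT : (0:ℝ) ≤ (T:ℝ) := Nat.cast_nonneg T
    set X : ℝ := (T:ℝ)+2 with hX
    set Y : ℝ := (T:ℝ)+3 with hY
    have hX0 : 0 < X := by simp only [hX]; linarith
    have hY0 : 0 < Y := by simp only [hY]; linarith
    have hxX : (0:ℝ) < R*X := by nlinarith
    have hxY : (0:ℝ) < R*Y := by nlinarith
    have hLx : 0 < Real.log (R*X) := hlogpos T hT
    have hLy : 0 < Real.log (R*Y) := by
      have := hlogpos ((T:ℝ)+1) (by linarith)
      have hxy : R*(((T:ℝ)+1)+2) = R*Y := by simp only [hY]; ring_nf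
      rwa [hxy] at this
    have hrx : (0:ℝ) < (R*X) ^ (-(1:ℝ)/d) := Real.rpow_pos_of_pos hxX _
    have hry : (0:ℝ) < (R*Y) ^ (-(1:ℝ)/d) := Real.rpow_pos_of_pos hxY _
    have key : ∀ L : ℝ, 0 < L → (L ^ (-Δ)) ^ a = L ^ (-s) := by
      intro L hL
      rw [← Real.rpow_natCast (L ^ (-Δ)) a, ← Real.rpow_mul hL.le]
      congr 1
      simp only [hsdef]; ring
    have hgT : g T = ((Real.log (R*X)) ^ (-Δ)) ^ a := by
      rw [key _ hLx]
    have hgT1 : g (T+1) = ((Real.log (R*Y)) ^ (-Δ)) ^ a := by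
      rw [key _ hLy]
      simp only [hg, hY]
      push_cast
      ring_nf
    -- first product
    have h1 : (X / ((R*X) ^ (-(1:ℝ)/d))) ^ a * (((R*X) ^ (-(1:ℝ)/d) * (Real.log (R*X)) ^ (-Δ)) / X) ^ a
        = ((Real.log (R*X)) ^ (-Δ)) ^ a := by
      rw [← mul_pow]
      congr 1
      field_simp
    -- second product
    have h2 : (X / ((R*X) ^ (-(1:ℝ)/d))) ^ a * (((R*Y) ^ (-(1:ℝ)/d) * (Real.log (R*Y)) ^ (-Δ)) / Y) ^ a
        = c T * ((Real.log (R*Y)) ^ (-Δ)) ^ a := by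
      rw [← mul_pow]
      have hbase : (X / ((R*X) ^ (-(1:ℝ)/d))) * (((R*Y) ^ (-(1:ℝ)/d) * (Real.log (R*Y)) ^ (-Δ)) / Y)
          = (X/Y) * ((R*Y) ^ (-(1:ℝ)/d) / (R*X) ^ (-(1:ℝ)/d)) * (Real.log (R*Y)) ^ (-Δ) := by
        field_simp
      rw [hbase]
      rw [mul_pow, mul_pow]
      congr 1
      -- (X/Y)^a * ((R*Y)^{-1/d}/(R*X)^{-1/d})^a = c T
      have hd1 : (R*Y) ^ (-(1:ℝ)/d) / (R*X) ^ (-(1:ℝ)/d) = (X/Y) ^ ((1:ℝ)/d) := by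
        rw [← Real.div_rpow hxY.le hxX.le]
        have : R*Y/(R*X) = Y/X := by
          field_simp
        rw [this]
        rw [neg_div, Real.rpow_neg (by positivity), ← Real.inv_rpow (by positivity), inv_div]
      rw [hd1]
      rw [← Real.rpow_natCast ((X/Y) ^ ((1:ℝ)/d)) a, ← Real.rpow_mul (by positivity),
          ← Real.rpow_natCast (X/Y) a, ← Real.rpow_add (by positivity)]
      simp only [hc, hX, hY, hp]
      congr 1
      ring
    rw [mul_sub, h1, h2, hgT, hgT1]
  -- summability of the two pieces
  have hganti : ∀ T, g (T+1) ≤ g T := by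
    intro T
    have hT : (0:ℝ) ≤ (T:ℝ) := Nat.cast_nonneg T
    simp only [hg]
    push_cast
    apply rpow_neg_anti (hlogpos T hT)
    · apply Real.log_le_log (by nlinarith)
      nlinarith
    · linarith
  have hgnn : ∀ T, 0 ≤ g T := by
    intro T; exact Real.rpow_nonneg (hlogpos T (Nat.cast_nonneg T)).le _
  have h1 : Summable (fun T => g T - g (T+1)) := telescope_summable hganti hgnn
  have hcle1 : ∀ T : ℕ, c T ≤ 1 := by
    intro T
    have hT : (0:ℝ) ≤ (T:ℝ) := Nat.cast_nonneg T
    apply Real.rpow_le_one (by positivity)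
    · rw [div_le_one (by linarith)]; linarith
    · linarith
  have h2 : Summable (fun T => (1 - c T) * g (T+1)) := by
    apply Summable.of_nonneg_of_le _ _ ((bertrand_summable hs).mul_left p)
    · intro T
      have := hcle1 T
      have := hgnn (T+1)
      nlinarith
    · intro T
      have hT : (0:ℝ) ≤ (T:ℝ) := Nat.cast_nonneg T
      have hlT : 0 < Real.log ((T:ℝ)+2) := Real.log_pos (by linarith)
      have hcb : 1 - p * (1/((T:ℝ)+3)) ≤ c T := by
        have hb := one_add_mul_self_le_rpow_one_add (s := -(1/((T:ℝ)+3)))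
          (by rw [neg_le]; rw [neg_neg]; rw [div_le_iff₀ (by linarith)]; linarith) hp1
        have hbase : (1 + -(1/((T:ℝ)+3))) = ((T:ℝ)+2)/((T:ℝ)+3) := by
          field_simp
          ring
        rw [hbase] at hb
        simp only [hc]
        linarith [hb]
      have hgb : g (T+1) ≤ (Real.log ((T:ℝ)+2)) ^ (-s) := by
        simp only [hg]; push_cast
        apply rpow_neg_anti hlT _ (by linarith)
        apply Real.log_le_log (by linarith)
        nlinarith
      have hgnn1 := hgnn (T+1)
      have hsnn : (0:ℝ) ≤ (Real.log ((T:ℝ)+2)) ^ (-s) := Real.rpow_nonneg hlT.le _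
      have hstep : (1 - c T) * g (T+1) ≤ (p * (1/((T:ℝ)+3))) * (Real.log ((T:ℝ)+2)) ^ (-s) := by
        apply mul_le_mul (by linarith) hgb hgnn1 (by positivity)
      apply le_trans hstep
      rw [Real.rpow_neg hlT.le]
      have hspos : (0:ℝ) < (Real.log ((T:ℝ)+2)) ^ s := Real.rpow_pos_of_pos hlT s
      have heq : p * (1/(((T:ℝ)+2) * (Real.log ((T:ℝ)+2)) ^ s))
          = p * (1/((T:ℝ)+2)) * ((Real.log ((T:ℝ)+2)) ^ s)⁻¹ := by
        rw [one_div, mul_inv, one_div]; ring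
      rw [heq]
      have hmono : p * (1/((T:ℝ)+3)) ≤ p * (1/((T:ℝ)+2)) := by
        apply mul_le_mul_of_nonneg_left _ (by positivity)
        apply one_div_le_one_div_of_le (by positivity) (by linarith)
      exact mul_le_mul_of_nonneg_right hmono (by positivity)
  exact (h1.add h2).congr (fun T => by rw [hident T]; ring)
end
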